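/- Let b : ℕ → ℚ satisfy b(0)=1, b(1)=-1, b(2)=A with A ≤ 0, and b(n) = -(1/2)·∑_{k=0}^{n-1} b(k)·C(n+1,k+1) for n ≥ 3. Define s(j,d) = ∑_{k=j}^{d} (1/(k+1))·C(d-j,d-k)·b(k). Then for all d ≥ 2 and all 0 ≤ j ≤ d, s(j,d) = (-1)^d · s(d-j,d). -/

import Mathlib

private def TT (c : ℕ → ℚ) (j m : ℕ) : ℚ :=
  ∑ t ∈ Finset.range (m+1), (m.choose t : ℚ) * c (j+t)

private lemma TT_zero (c : ℕ → ℚ) (j : ℕ) : TT c j 0 = c j := by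
  simp [TT]

private lemma TT_pascal (c : ℕ → ℚ) (j m : ℕ) :
    TT c j (m+1) = TT c j m + TT c (j+1) m := by
  have h1 : TT c j (m+1)
      = (∑ t ∈ Finset.range (m+1), ((m+1).choose (t+1) : ℚ) * c (j+(t+1))) + c j := by
    rw [TT, Finset.sum_range_succ']
    simp
  have h2 : ∀ t ∈ Finset.range (m+1), ((m+1).choose (t+1) : ℚ) * c (j+(t+1))
      = (m.choose t : ℚ) * c ((j+1)+t) + (m.choose (t+1) : ℚ) * c (j+(t+1)) := by
    intro t _
    have e : j + (t+1) = (j+1) + t := by omega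
    rw [Nat.choose_succ_succ]
    push_cast
    rw [e]
    ring
  have h4 : (∑ t ∈ Finset.range (m+1), (m.choose (t+1) : ℚ) * c (j+(t+1)))
      = TT c j m - c j := by
    rw [Finset.sum_range_succ]
    rw [Nat.choose_succ_self]
    rw [TT, Finset.sum_range_succ']
    simp
  rw [h1, Finset.sum_congr rfl h2, Finset.sum_add_distrib, h4]
  have h3 : ∑ t ∈ Finset.range (m+1), (m.choose t : ℚ) * c ((j+1)+t) = TT c (j+1) m := rfl
  rw [h3]
  ring

private lemma TT_unfold (c : ℕ → ℚ) :
    ∀ i j, TT c j i = c (j+i) + ∑ r ∈ Finset.range i, TT c (j+r) (i-1-r) := by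
  intro i
  induction i with
  | zero => intro j; simp [TT_zero]
  | succ i ih =>
    intro j
    have hsum : ∑ r ∈ Finset.range i, TT c (j+(r+1)) (i+1-1-(r+1))
        = ∑ r ∈ Finset.range i, TT c ((j+1)+r) (i-1-r) := by
      apply Finset.sum_congr rfl
      intro r _
      have ha : j+(r+1) = (j+1)+r := by omega
      have hb : i+1-1-(r+1) = i-1-r := by omega
      rw [ha, hb]
    rw [TT_pascal c j i, ih (j+1)]
    rw [show (∑ r ∈ Finset.range (i+1), TT c (j+r) (i+1-1-r))
        = (∑ r ∈ Finset.range i, TT c (j+(r+1)) (i+1-1-(r+1))) + TT c (j+0) (i+1-1-0)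
      from Finset.sum_range_succ' (fun r => TT c (j+r) (i+1-1-r)) i]
    have e0 : i + 1 - 1 - 0 = i := by omega
    have e1 : j + (i+1) = (j+1) + i := by omega
    rw [hsum, e0, e1]
    simp only [Nat.add_zero]
    abel

private lemma TT_sym (c : ℕ → ℚ)
    (hc : ∀ n, 3 ≤ n → TT c 0 n = - c n)
    (hbase : c 0 + 2 * c 1 = 0) :
    ∀ d, 2 ≤ d → ∀ j, j ≤ d → TT c j (d-j) = (-1)^d * TT c (d-j) j := by
  intro d hd
  induction d, hd using Nat.le_induction with
  | base =>
    intro j hj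
    interval_cases j <;>
      simp [TT, Finset.sum_range_succ, Nat.choose_one_right] <;> linarith
  | succ d hd ih =>
    intro j hj
    have hunfold : ∀ j, j ≤ d+1 → TT c j (d+1-j)
        = c (d+1) + ∑ r ∈ Finset.range (d+1-j), TT c (j+r) (d-(j+r)) := by
      intro j hj
      rw [TT_unfold c (d+1-j) j]
      have e : j + (d+1-j) = d+1 := by omega
      rw [e]
      congr 1
      apply Finset.sum_congr rfl
      intro r hr
      simp only [Finset.mem_range] at hr
      have e2 : d+1-j-1-r = d-(j+r) := by omega
      rw [e2]
    have htail : ∀ j, j ≤ d+1 →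
        ∑ r ∈ Finset.range (d+1-j), TT c (j+r) (d-(j+r))
        = (-1)^d * ∑ r ∈ Finset.range (d+1-j), TT c r (d-r) := by
      intro j hj
      rw [← Finset.sum_range_reflect (fun r => TT c r (d-r)) (d+1-j), Finset.mul_sum]
      apply Finset.sum_congr rfl
      intro r hr
      simp only [Finset.mem_range] at hr
      have e1 : d+1-j-1-r = d-(j+r) := by omega
      have e2 : d-(d-(j+r)) = j+r := by omega
      simp only [e1, e2]
      exact ih (j+r) (by omega)
    have key : ∀ j, j ≤ d+1 → TT c j (d+1-j)
        = c (d+1) + (-1)^d * ∑ r ∈ Finset.range (d+1-j), TT c r (d-r) := by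
      intro j hj
      rw [hunfold j hj, htail j hj]
    have hsplit : ∀ j, j ≤ d+1 →
        (∑ r ∈ Finset.range (d+1), TT c r (d-r))
        = (∑ r ∈ Finset.range j, TT c r (d-r))
          + ∑ r ∈ Finset.range (d+1-j), TT c (j+r) (d-(j+r)) := by
      intro j hj
      have e : d+1 = j + (d+1-j) := by omega
      conv_lhs => rw [e, Finset.sum_range_add]
    have hQd : (∑ r ∈ Finset.range (d+1), TT c r (d-r)) = -2 * c (d+1) := by
      have h0 := hunfold 0 (by omega)
      have h1 := hc (d+1) (by omega)
      simp only [Nat.sub_zero, Nat.zero_add] at h0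
      rw [h1] at h0
      linarith [h0]
    have hrel : ∀ j, j ≤ d+1 →
        (-1:ℚ)^d * (∑ r ∈ Finset.range (d+1-j), TT c r (d-r))
        = (∑ r ∈ Finset.range (d+1), TT c r (d-r))
          - ∑ r ∈ Finset.range j, TT c r (d-r) := by
      intro j hj
      rw [← htail j hj]
      have := hsplit j hj
      linarith
    have hflip : ((-1:ℚ))^d * (∑ r ∈ Finset.range (d+1), TT c r (d-r))
        = ∑ r ∈ Finset.range (d+1), TT c r (d-r) := by
      have h := hrel 0 (by omega)
      simpa using h
    have e1 := key j (by omega)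
    have e2 := key (d+1-j) (by omega)
    have ej : d+1-(d+1-j) = j := by omega
    rw [ej] at e2
    have e3 := hrel j (by omega)
    rcases Nat.even_or_odd d with he | ho
    · have p1 : ((-1:ℚ))^d = 1 := he.neg_one_pow
      have p2 : ((-1:ℚ))^(d+1) = -1 := by rw [pow_succ, p1]; ring
      rw [p1] at e1 e2 e3
      rw [e1, e2, p2]
      linarith [hQd]
    · have p1 : ((-1:ℚ))^d = -1 := ho.neg_one_pow
      have p2 : ((-1:ℚ))^(d+1) = 1 := by rw [pow_succ, p1]; ring
      rw [p1] at e1 e2 e3 hflip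
      rw [e1, e2, p2]
      linarith [hQd]

theorem stmt_8 (A : ℚ) (hA : A ≤ 0) (b : ℕ → ℚ)
    (h0 : b 0 = 1) (h1 : b 1 = -1) (h2 : b 2 = A)
    (hrec : ∀ n, 3 ≤ n →
      2 * b n = -∑ k ∈ Finset.range n, b k * ((n + 1).choose (k + 1) : ℚ))
    (s : ℕ → ℕ → ℚ)
    (hs : ∀ j d, s j d = ∑ k ∈ Finset.Icc j d,
      (1 / (k + 1 : ℚ)) * ((d - j).choose (d - k) : ℚ) * b k) :
    ∀ d, 2 ≤ d → ∀ j, j ≤ d → s j d = (-1) ^ d * s (d - j) d := by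
  set c : ℕ → ℚ := fun k => (1/((k:ℚ)+1)) * b k with hcdef
  have hsT : ∀ j d, j ≤ d → s j d = TT c j (d-j) := by
    intro j d hj
    rw [hs, TT]
    rw [← Finset.Ico_add_one_right_eq_Icc, Finset.sum_Ico_eq_sum_range]
    have er : d + 1 - j = (d - j) + 1 := by omega
    rw [er]
    apply Finset.sum_congr rfl
    intro t ht
    simp only [Finset.mem_range] at ht
    have e1 : d - (j+t) = (d-j) - t := by omega
    have e2 : (d-j).choose ((d-j) - t) = (d-j).choose t := Nat.choose_symm (by omega)
    rw [e1, e2, hcdef]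
    push_cast
    ring
  have hc : ∀ n, 3 ≤ n → TT c 0 n = - c n := by
    intro n hn
    have hb := hrec n hn
    rw [TT, Finset.sum_range_succ]
    have hmain : ∑ t ∈ Finset.range n, (n.choose t : ℚ) * c (0+t)
        = (1/((n:ℚ)+1)) * ∑ k ∈ Finset.range n, b k * ((n+1).choose (k+1) : ℚ) := by
      rw [Finset.mul_sum]
      apply Finset.sum_congr rfl
      intro t _
      have h := Nat.add_one_mul_choose_eq n t
      have hq : ((n:ℚ)+1) * (n.choose t : ℚ) = ((n+1).choose (t+1) : ℚ) * ((t:ℚ)+1) := by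
        exact_mod_cast h
      simp only [hcdef, Nat.zero_add]
      have ht : ((t:ℚ)+1) ≠ 0 := by positivity
      have hn1 : ((n:ℚ)+1) ≠ 0 := by positivity
      field_simp
      linear_combination (b t) * hq
    have hsum : ∑ k ∈ Finset.range n, b k * ((n+1).choose (k+1) : ℚ) = -(2 * b n) := by
      linarith [hb]
    rw [hmain, hsum]
    have hn1 : ((n:ℚ)+1) ≠ 0 := by positivity
    simp only [hcdef, Nat.zero_add, Nat.choose_self]
    push_cast
    ring
  have hbase : c 0 + 2 * c 1 = 0 := by
    simp only [hcdef]
    rw [h0, h1]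
    norm_num
  intro d hd j hj
  have h1' := hsT j d hj
  have h2' := hsT (d-j) d (by omega)
  have h3' : d - (d-j) = j := by omega
  rw [h3'] at h2'
  rw [h1', h2']
  exact TT_sym c hc hbase d hd j hj
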